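/- Let X and Y be Polish spaces, each equipped with its Borel σ-algebra, and let f : X → Y be a Borel measurable map. Then the induced pushforward map between the spaces of Borel probability measures, ProbabilityMeasure X → ProbabilityMeasure Y, μ ↦ μ ∘ f⁻¹, is Borel measurable, where each space of probability measures carries the Borel σ-algebra of its topology of weak convergence. -/

import Mathlib

open MeasureTheory Topology Filter Set Metric BoundedContinuousFunction
open scoped ENNReal NNReal


open MeasureTheory Topology Filter Set Metric BoundedContinuousFunction
open scoped ENNReal NNReal

section Aux

variable {Ω : Type*} [TopologicalSpace Ω] [MeasurableSpace Ω] [OpensMeasurableSpace Ω]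

lemma aux_continuous_lintegral_bcf [HasOuterApproxClosed Ω] (f : Ω →ᵇ ℝ≥0) :
    Continuous (fun μ : ProbabilityMeasure Ω => ∫⁻ ω, f ω ∂(μ : Measure Ω)) := by
  have : (fun μ : ProbabilityMeasure Ω => ∫⁻ ω, f ω ∂(μ : Measure Ω))
      = fun μ => (μ.toFiniteMeasure.testAgainstNN f : ℝ≥0∞) := by
    funext μ
    rw [FiniteMeasure.testAgainstNN_coe_eq]
    rfl
  rw [this]
  exact ENNReal.continuous_coe.comp (ProbabilityMeasure.continuous_testAgainstNN_eval f)

lemma aux_measurable_eval [HasOuterApproxClosed Ω] [BorelSpace Ω] {A : Set Ω} (hA : MeasurableSet A) :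
    Measurable[borel (ProbabilityMeasure Ω)]
      (fun μ : ProbabilityMeasure Ω => (μ : Measure Ω) A) := by
  letI : MeasurableSpace (ProbabilityMeasure Ω) := borel _
  haveI : BorelSpace (ProbabilityMeasure Ω) := ⟨rfl⟩
  have closed_case : ∀ F : Set Ω, IsClosed F →
      Measurable (fun μ : ProbabilityMeasure Ω => (μ : Measure Ω) F) := by
    intro F hF
    apply measurable_of_tendsto_metrizable
      (f := fun n (μ : ProbabilityMeasure Ω) => ∫⁻ ω, hF.apprSeq n ω ∂(μ : Measure Ω))
      (fun n => (aux_continuous_lintegral_bcf (hF.apprSeq n)).measurable)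
    rw [tendsto_pi_nhds]
    exact fun μ => HasOuterApproxClosed.tendsto_lintegral_apprSeq hF (μ : Measure Ω)
  refine MeasurableSet.induction_on_open (C := fun A _ =>
      Measurable (fun μ : ProbabilityMeasure Ω => (μ : Measure Ω) A)) ?_ ?_ ?_ A hA
  · intro U hU
    have key : ∀ μ : ProbabilityMeasure Ω, (μ : Measure Ω) U = 1 - (μ : Measure Ω) Uᶜ := by
      intro μ
      rw [measure_compl hU.measurableSet (measure_ne_top _ _), measure_univ,
        ENNReal.sub_sub_cancel ENNReal.one_ne_top prob_le_one]
    simp_rw [key]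
    exact measurable_const.sub (closed_case _ hU.isClosed_compl)
  · intro s hs ihs
    have key : ∀ μ : ProbabilityMeasure Ω, (μ : Measure Ω) sᶜ = 1 - (μ : Measure Ω) s := by
      intro μ
      rw [measure_compl hs (measure_ne_top _ _), measure_univ]
    simp_rw [key]
    exact measurable_const.sub ihs
  · intro g hdisj hmeas ih
    have key : ∀ μ : ProbabilityMeasure Ω,
        (μ : Measure Ω) (⋃ i, g i) = ∑' i, (μ : Measure Ω) (g i) :=
      fun μ => measure_iUnion hdisj hmeas
    simp_rw [key]
    exact Measurable.ennreal_tsum ih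

end Aux


lemma aux_tendsto_tsum_mul {p : ℕ → ℝ≥0∞} {ps : ℕ → ℕ → ℝ≥0∞} {a : ℕ → ℝ≥0∞} {c : ℝ≥0∞}
    (hc : c ≠ ∞) (ha : ∀ i, a i ≤ c)
    (hp : ∑' i, p i = 1) (hps : ∀ k, ∑' i, ps k i = 1)
    (hlim : ∀ i, Tendsto (fun k => ps k i) atTop (𝓝 (p i))) :
    Tendsto (fun k => ∑' i, ps k i * a i) atTop (𝓝 (∑' i, p i * a i)) := by
  have fatou : ∀ b : ℕ → ℝ≥0∞, (∀ i, b i ≤ c) →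
      (∑' i, p i * b i) ≤ atTop.liminf (fun k => ∑' i, ps k i * b i) := by
    intro b hb
    have step1 : ∀ i, p i * b i = atTop.liminf (fun k => ps k i * b i) := by
      intro i
      exact (ENNReal.Tendsto.mul_const (hlim i)
        (Or.inr ((hb i).trans_lt (lt_top_iff_ne_top.mpr hc)).ne)).liminf_eq.symm
    calc ∑' i, p i * b i = ∑' i, atTop.liminf (fun k => ps k i * b i) :=
          tsum_congr step1
      _ = ∫⁻ i, atTop.liminf (fun k => ps k i * b i) ∂(Measure.count) := by
          rw [MeasureTheory.lintegral_count]
      _ ≤ atTop.liminf (fun k => ∫⁻ i, ps k i * b i ∂(Measure.count)) :=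
          lintegral_liminf_le (fun k => measurable_of_countable _)
      _ = atTop.liminf (fun k => ∑' i, ps k i * b i) := by
          simp_rw [MeasureTheory.lintegral_count]
  have sum_split : ∀ q : ℕ → ℝ≥0∞, (∑' i, q i) = 1 →
      (∑' i, q i * a i) + (∑' i, q i * (c - a i)) = c := by
    intro q hq
    rw [← ENNReal.tsum_add]
    have : ∀ i, q i * a i + q i * (c - a i) = q i * c := by
      intro i
      rw [← mul_add, add_tsub_cancel_of_le (ha i)]
    simp_rw [this]
    rw [ENNReal.tsum_mul_right, hq, one_mul]
  set L := ∑' i, p i * a i with hL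
  set M := ∑' i, p i * (c - a i) with hM
  have hLM : L + M = c := sum_split p hp
  have hM_le : M ≤ c := le_of_add_le_right hLM.le
  have hM_ne : M ≠ ∞ := (hM_le.trans_lt (lt_top_iff_ne_top.mpr hc)).ne
  have hL_eq : L = c - M := ENNReal.eq_sub_of_add_eq hM_ne hLM
  have hvu : ∀ k, (∑' i, ps k i * a i) = c - (∑' i, ps k i * (c - a i)) := by
    intro k
    have h1 := sum_split (ps k) (hps k)
    have hv_le : (∑' i, ps k i * (c - a i)) ≤ c := le_of_add_le_right h1.le
    exact ENNReal.eq_sub_of_add_eq ((hv_le.trans_lt (lt_top_iff_ne_top.mpr hc)).ne) h1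
  apply tendsto_of_le_liminf_of_limsup_le
  · exact hL ▸ fatou a ha
  · calc atTop.limsup (fun k => ∑' i, ps k i * a i)
        = atTop.limsup (fun k => c - (∑' i, ps k i * (c - a i))) := by simp_rw [hvu]
      _ = c - atTop.liminf (fun k => ∑' i, ps k i * (c - a i)) :=
          ENNReal.limsup_const_sub atTop _ hc
      _ ≤ c - M := tsub_le_tsub_left (fatou _ (fun i => tsub_le_self)) c
      _ = L := hL_eq.symm
  · exact isBounded_le_of_top
  · exact isBounded_ge_of_bot


set_option maxHeartbeats 2000000 in
lemma aux_measurable_of_eval {Z : Type*} [mZ : MeasurableSpace Z]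
    {Y : Type*} [TopologicalSpace Y] [PolishSpace Y] [MeasurableSpace Y] [BorelSpace Y]
    {g : Z → ProbabilityMeasure Y}
    (hg : ∀ A : Set Y, MeasurableSet A → Measurable fun z => (g z : Measure Y) A) :
    Measurable[mZ, borel (ProbabilityMeasure Y)] g := by
  classical
  letI : MeasurableSpace (ProbabilityMeasure Y) := borel _
  haveI : BorelSpace (ProbabilityMeasure Y) := ⟨rfl⟩
  rcases isEmpty_or_nonempty Y with hY | hY
  · haveI : IsEmpty Z := ⟨fun z => (g z).nonempty.elim (fun y => hY.false y)⟩
    exact measurable_of_empty g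
  obtain ⟨y₀⟩ := hY
  letI := TopologicalSpace.upgradeIsCompletelyMetrizable Y
  -- measurable partitions
  have exPart := fun n : ℕ => SeparableSpace.exists_measurable_partition_diam_le Y
      (ε := 1 / (n + 1)) Nat.one_div_pos_of_nat
  choose As As_mble As_bdd As_diam As_cover As_disj using exPart
  -- representative points
  let x : ℕ → ℕ → Y := fun n i => if h : (As n i).Nonempty then h.choose else y₀
  have hx : ∀ n i, (As n i).Nonempty → x n i ∈ As n i := by
    intro n i h
    simp only [x, dif_pos h]
    exact h.choose_spec
  -- the sum of evaluations over a partition is 1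
  have sum_eval : ∀ n (z : Z), (∑' i, (g z : Measure Y) (As n i)) = 1 := by
    intro n z
    rw [← measure_iUnion (As_disj n) (As_mble n), As_cover n, measure_univ]
  -- the discretized measures
  have mk_prob : ∀ (w : ℕ → ℝ≥0∞) (_ : ∑' i, w i = 1) (xs : ℕ → Y),
      IsProbabilityMeasure (Measure.sum (fun i => w i • Measure.dirac (xs i))) := by
    intro w hw xs
    constructor
    rw [Measure.sum_apply _ MeasurableSet.univ]
    simp only [Measure.smul_apply, measure_univ, smul_eq_mul, mul_one, hw]
  -- lintegral against discretized measures
  have lint_disc : ∀ (w : ℕ → ℝ≥0∞) (xs : ℕ → Y) (φ : Y → ℝ≥0∞) (hφ : Measurable φ),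
      ∫⁻ ω, φ ω ∂(Measure.sum (fun i => w i • Measure.dirac (xs i)))
        = ∑' i, w i * φ (xs i) := by
    intro w xs φ hφ
    rw [lintegral_sum_measure]
    congr 1
    funext i
    rw [lintegral_smul_measure, lintegral_dirac' _ hφ, smul_eq_mul]
  -- the discretization maps
  let G : ℕ → Z → ProbabilityMeasure Y := fun n z =>
    ⟨Measure.sum (fun i => ((g z : Measure Y) (As n i)) • Measure.dirac (x n i)),
      mk_prob _ (sum_eval n z) _⟩
  -- measurability of each G n
  have G_mble : ∀ n, Measurable (G n) := by
    intro n
    let S : Type _ := ↥{q : ℕ → ℝ≥0∞ | (∑' i, q i) = 1}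
    let H : S → ProbabilityMeasure Y := fun q =>
      ⟨Measure.sum (fun i => q.1 i • Measure.dirac (x n i)), mk_prob _ q.2 _⟩
    have H_cont : Continuous H := by
      apply SeqContinuous.continuous
      intro qs q hqs
      apply ProbabilityMeasure.tendsto_iff_forall_lintegral_tendsto.mpr
      intro f
      simp only [Function.comp_def]
      have fm : Measurable fun ω => (f ω : ℝ≥0∞) :=
        measurable_coe_nnreal_ennreal.comp f.continuous.measurable
      have lhs : ∀ k, ∫⁻ ω, f ω ∂((H (qs k)) : Measure Y) = ∑' i, (qs k).1 i * (f (x n i) : ℝ≥0∞) :=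
        fun k => lint_disc _ _ _ fm
      have rhs : ∫⁻ ω, f ω ∂((H q) : Measure Y) = ∑' i, q.1 i * (f (x n i) : ℝ≥0∞) :=
        lint_disc _ _ _ fm
      simp_rw [lhs, rhs]
      apply aux_tendsto_tsum_mul (c := ((nndist f 0 : ℝ≥0) : ℝ≥0∞))
      · exact ENNReal.coe_ne_top
      · intro i
        exact_mod_cast (by simpa using f.nndist_coe_le_nndist (x n i) (g := 0) : f (x n i) ≤ nndist f 0)
      · exact q.2
      · exact fun k => (qs k).2
      · intro i
        have : Tendsto (fun k => (qs k).1 i) atTop (𝓝 (q.1 i)) :=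
          ((continuous_apply i).comp continuous_subtype_val).continuousAt.tendsto.comp hqs
        exact this
    have e_mble : Measurable (fun z => (⟨fun i => (g z : Measure Y) (As n i), sum_eval n z⟩ : S)) := by
      apply Measurable.subtype_mk
      exact measurable_pi_lambda _ (fun i => hg _ (As_mble n i))
    have comp_eq : G n = fun z => H ⟨fun i => (g z : Measure Y) (As n i), sum_eval n z⟩ := by
      funext z
      exact Subtype.ext rfl
    rw [comp_eq]
    exact H_cont.measurable.comp e_mble
  -- pointwise convergence G n z → g z
  have G_tendsto : ∀ z : Z, Tendsto (fun n => G n z) atTop (𝓝 (g z)) := by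
    intro z
    apply ProbabilityMeasure.tendsto_iff_forall_lintegral_tendsto.mpr
    intro f
    have fm : Measurable fun ω => (f ω : ℝ≥0∞) :=
      measurable_coe_nnreal_ennreal.comp f.continuous.measurable
    -- piecewise constant approximations of f
    let h : ℕ → Y → ℝ≥0∞ := fun n ω => ∑' i, (As n i).indicator (fun _ => (f (x n i) : ℝ≥0∞)) ω
    have h_mble : ∀ n, Measurable (h n) :=
      fun n => Measurable.ennreal_tsum (fun i => measurable_const.indicator (As_mble n i))
    -- choose for each point and n the partition piece containing it
    have exI : ∀ (ω : Y) (n : ℕ), ∃ i, ω ∈ As n i := by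
      intro ω n
      have : ω ∈ ⋃ i, As n i := by rw [As_cover n]; trivial
      exact mem_iUnion.mp this
    have h_eq : ∀ (ω : Y) (n : ℕ), ∀ i, ω ∈ As n i → h n ω = (f (x n i) : ℝ≥0∞) := by
      intro ω n i hi
      have : ∀ j, j ≠ i → (As n j).indicator (fun _ => (f (x n j) : ℝ≥0∞)) ω = 0 := by
        intro j hj
        apply indicator_of_notMem
        exact fun hωj => (Set.disjoint_left.mp (As_disj n hj) hωj) hi
      rw [show h n ω = _ from tsum_eq_single i this, indicator_of_mem hi]
    have h_le : ∀ n ω, h n ω ≤ ((nndist f 0 : ℝ≥0) : ℝ≥0∞) := by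
      intro n ω
      obtain ⟨i, hi⟩ := exI ω n
      rw [h_eq ω n i hi]
      exact_mod_cast (by simpa using f.nndist_coe_le_nndist (x n i) (g := 0) :
        f (x n i) ≤ nndist f 0)
    have h_tendsto : ∀ ω, Tendsto (fun n => h n ω) atTop (𝓝 ((f ω : ℝ≥0∞))) := by
      intro ω
      choose I hI using exI ω
      have dist_le : ∀ n, dist (x n (I n)) ω ≤ 1 / (n + 1) := by
        intro n
        exact (dist_le_diam_of_mem (As_bdd n (I n)) (hx n (I n) ⟨ω, hI n⟩) (hI n)).trans
          (As_diam n (I n))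
      have x_tendsto : Tendsto (fun n => x n (I n)) atTop (𝓝 ω) := by
        rw [tendsto_iff_dist_tendsto_zero]
        exact squeeze_zero (fun n => dist_nonneg) dist_le
          tendsto_one_div_add_atTop_nhds_zero_nat
      have : Tendsto (fun n => ((f (x n (I n)) : ℝ≥0) : ℝ≥0∞)) atTop (𝓝 ((f ω : ℝ≥0∞))) :=
        ENNReal.tendsto_coe.mpr ((f.continuous.tendsto ω).comp x_tendsto)
      exact this.congr (fun n => (h_eq ω n (I n) (hI n)).symm)
    -- identify the lintegrals
    have lhs : ∀ n, ∫⁻ ω, f ω ∂((G n z) : Measure Y)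
        = ∫⁻ ω, h n ω ∂((g z) : Measure Y) := by
      intro n
      rw [show ∫⁻ ω, f ω ∂((G n z) : Measure Y)
          = ∑' i, (g z : Measure Y) (As n i) * (f (x n i) : ℝ≥0∞) from lint_disc _ _ _ fm]
      rw [lintegral_tsum (fun i => (measurable_const.indicator (As_mble n i)).aemeasurable)]
      congr 1
      funext i
      rw [lintegral_indicator (As_mble n i), setLIntegral_const, mul_comm]
    simp_rw [lhs]
    exact tendsto_lintegral_of_dominated_convergence _ h_mble
      (fun n => Eventually.of_forall (h_le n))
      (by simp [lintegral_const, edist_ne_top]) (Eventually.of_forall h_tendsto)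
  exact measurable_of_tendsto_metrizable G_mble
    (tendsto_pi_nhds.mpr G_tendsto)


open MeasureTheory in
/-- For Polish spaces `X`, `Y` and a Borel measurable `f : X → Y`, the induced
pushforward map `ProbabilityMeasure X → ProbabilityMeasure Y`, `μ ↦ μ ∘ f⁻¹`,
is Borel measurable for the Borel σ-algebras of the topologies of weak
convergence. -/
theorem pushforward_probabilityMeasure_measurable
    {X Y : Type*} [TopologicalSpace X] [PolishSpace X] [MeasurableSpace X] [BorelSpace X]
    [TopologicalSpace Y] [PolishSpace Y] [MeasurableSpace Y] [BorelSpace Y]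
    {f : X → Y} (hf : Measurable f) :
    @Measurable (ProbabilityMeasure X) (ProbabilityMeasure Y) (borel _) (borel _)
      (fun μ : ProbabilityMeasure X =>
        (⟨μ.toMeasure.map f,
          Measure.isProbabilityMeasure_map hf.aemeasurable⟩ : ProbabilityMeasure Y)) := by
  letI : MeasurableSpace (ProbabilityMeasure X) := borel _
  apply aux_measurable_of_eval
  intro A hA
  simp only [ProbabilityMeasure.coe_mk, Measure.map_apply hf hA]
  exact aux_measurable_eval (hf hA)
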